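/- Let n, k, m be nonnegative integers and let F_1,…,F_m be subsets of {1,…,n}, each of size at least 3. For each i ∈ {1,…,m}, let G_i be a simple graph on the vertex set {1,…,n} such that G_i contains a cycle visiting exactly the vertices of F_i, every edge of G_i lies on this cycle, and G_i has no edge with an endpoint outside F_i. Then there exists a set S ⊆ {1,…,n} with |S| ≤ k such that G_i − S is acyclic for every i ∈ {1,…,m} if and only if there exists a set H ⊆ {1,…,n} with |H| ≤ k such that H ∩ F_i ≠ ∅ for every i ∈ {1,…,m}. -/

import Mathlib

open SimpleGraph Walk

section Aux
variable {V : Type*} [DecidableEq V] {G : SimpleGraph V}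

lemma aux_mem_support_of_mem_edges {v w x : V} {p : G.Walk v w} {e : Sym2 V}
    (he : e ∈ p.edges) (hx : x ∈ e) : x ∈ p.support := by
  induction e with
  | _ a b =>
    rcases Sym2.mem_iff.mp hx with rfl | rfl
    · exact p.fst_mem_support_of_mem_edges he
    · exact p.snd_mem_support_of_mem_edges he

/-- Lift a walk into an induced subgraph when its support lies in the set. -/
def auxInduceLift {s : Set V} :
    ∀ {u v : V} (p : G.Walk u v) (h : ∀ x ∈ p.support, x ∈ s),
      (G.induce s).Walk ⟨u, h u p.start_mem_support⟩ ⟨v, h v p.end_mem_support⟩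
  | _, _, Walk.nil, _ => Walk.nil
  | _, _, Walk.cons hadj p, h =>
      Walk.cons (by exact hadj)
        (auxInduceLift p (fun x hx => h x (by simp [Walk.support_cons, hx])))

lemma auxInduceLift_map {s : Set V} :
    ∀ {u v : V} (p : G.Walk u v) (h : ∀ x ∈ p.support, x ∈ s),
      (auxInduceLift p h).map (SimpleGraph.Embedding.induce s).toHom = p
  | _, _, Walk.nil, _ => rfl
  | _, _, Walk.cons hadj p, h => by
      rw [auxInduceLift]; exact congrArg (Walk.cons hadj) (auxInduceLift_map p _)

lemma aux_not_isAcyclic {s : Set V} {u : V} (c : G.Walk u u) (hc : c.IsCycle)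
    (hs : ∀ x ∈ c.support, x ∈ s) : ¬ (G.induce s).IsAcyclic := by
  intro h
  have heq := auxInduceLift_map c hs
  have : ((auxInduceLift c hs).map (SimpleGraph.Embedding.induce s).toHom).IsCycle := by
    rw [heq]; exact hc
  exact h _ ((Walk.map_isCycle_iff_of_injective
    (SimpleGraph.Embedding.induce (G := G) s).injective).mp this)

lemma aux_not_cycle_sub_path {G' : SimpleGraph V} {y z : V} (q : G.Walk y z)
    (hq : q.IsPath) {u : V} (c : G'.Walk u u) (hc : c.IsCycle)
    (hsub : ∀ e ∈ c.edges, e ∈ q.edges) : False := by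
  induction q with
  | nil =>
      have h3 := hc.three_le_length
      have hne : c.edges ≠ [] := by
        intro h
        rw [← c.length_edges, h] at h3
        simp at h3
      obtain ⟨e, he⟩ := List.exists_mem_of_ne_nil _ hne
      simpa using hsub e he
  | @cons y b z hadj q' ih =>
      rw [Walk.cons_isPath_iff] at hq
      obtain ⟨hq', hyns⟩ := hq
      have K : ∀ e ∈ (Walk.cons hadj q').edges, y ∈ e → e = s(y, b) := by
        intro e he hy
        rw [Walk.edges_cons, List.mem_cons] at he
        rcases he with rfl | he
        · rfl
        · exact absurd (aux_mem_support_of_mem_edges he hy) hyns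
      by_cases hmem : s(y, b) ∈ c.edges
      · have hy : y ∈ c.support := c.fst_mem_support_of_mem_edges hmem
        have hdc : (c.rotate y hy).IsCycle := hc.rotate hy
        have hde : ∀ e ∈ (c.rotate y hy).edges, e ∈ (Walk.cons hadj q').edges := by
          intro e he
          exact hsub e ((c.rotate_edges y hy).mem_iff.mp he)
        obtain ⟨a, hya, r, hdr⟩ := Walk.not_nil_iff.mp hdc.not_nil
        have h3 := hdc.three_le_length
        rw [hdr] at hdc hde h3
        rw [Walk.cons_isCycle_iff] at hdc
        obtain ⟨hr, hna⟩ := hdc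
        have hrnn : ¬ r.Nil := by
          rw [Walk.not_nil_iff_lt_length]
          simp only [Walk.length_cons] at h3
          omega
        have hrvnn : ¬ r.reverse.Nil := by
          rw [Walk.not_nil_iff_lt_length, Walk.length_reverse]
          rw [Walk.not_nil_iff_lt_length] at hrnn
          exact hrnn
        obtain ⟨w, hyw, r2, hrr⟩ := Walk.not_nil_iff.mp hrvnn
        have hwe : s(y, w) ∈ r.edges := by
          have : s(y, w) ∈ r.reverse.edges := by
            rw [hrr, Walk.edges_cons]; exact List.mem_cons_self
          rwa [Walk.edges_reverse, List.mem_reverse] at this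
        have h1 : s(y, a) = s(y, b) := by
          apply K
          · apply hde
            rw [Walk.edges_cons]; exact List.mem_cons_self
          · exact Sym2.mem_mk_left _ _
        have h2 : s(y, w) = s(y, b) := by
          apply K
          · apply hde
            rw [Walk.edges_cons]
            exact List.mem_cons_of_mem _ hwe
          · exact Sym2.mem_mk_left _ _
        rw [← h1] at h2
        rw [h2] at hwe
        exact hna hwe
      · apply ih hq'
        intro e he
        have := hsub e he
        rw [Walk.edges_cons, List.mem_cons] at this
        rcases this with rfl | h
        · exact absurd he hmem
        · exact h

lemma aux_support_subset {v u x : V} {c : G.Walk v v} (hc : c.IsCycle)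
    {c' : G.Walk u u} (hc' : c'.IsCycle)
    (hsub : ∀ e ∈ c'.edges, e ∈ c.edges) (hx : x ∈ c.support) : x ∈ c'.support := by
  by_contra hxn
  have hdc : (c.rotate x hx).IsCycle := hc.rotate hx
  obtain ⟨a, hxa, r, hdr⟩ := Walk.not_nil_iff.mp hdc.not_nil
  rw [hdr, Walk.cons_isCycle_iff] at hdc
  apply aux_not_cycle_sub_path r hdc.1 c' hc'
  intro e he
  have hed : e ∈ (c.rotate x hx).edges := (c.rotate_edges x hx).mem_iff.mpr (hsub e he)
  rw [hdr, Walk.edges_cons, List.mem_cons] at hed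
  rcases hed with rfl | h
  · exact absurd (aux_mem_support_of_mem_edges he (Sym2.mem_mk_left _ _)) hxn
  · exact h

end Aux

theorem stmt_8 (n k m : ℕ) (F : Fin m → Finset (Fin n)) (hF : ∀ i, 3 ≤ (F i).card)
    (G : Fin m → SimpleGraph (Fin n))
    (hcyc : ∀ i, ∃ (v : Fin n) (c : (G i).Walk v v), c.IsCycle ∧
      c.support.toFinset = F i ∧
      (∀ e ∈ (G i).edgeSet, e ∈ c.edges) ∧
      (∀ u w : Fin n, (G i).Adj u w → u ∈ F i)) :
    (∃ S : Finset (Fin n), S.card ≤ k ∧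
      ∀ i, ((G i).induce ((S : Set (Fin n))ᶜ)).IsAcyclic) ↔
    (∃ H : Finset (Fin n), H.card ≤ k ∧ ∀ i, (H ∩ F i).Nonempty) := by
  constructor
  · rintro ⟨S, hcard, hac⟩
    refine ⟨S, hcard, fun i => ?_⟩
    obtain ⟨v, c, hc, hsup, hedge, hin⟩ := hcyc i
    by_contra hne
    rw [Finset.not_nonempty_iff_eq_empty] at hne
    apply aux_not_isAcyclic c hc ?_ (hac i)
    intro x hxs
    have hxF : x ∈ F i := hsup ▸ List.mem_toFinset.mpr hxs
    simp only [Set.mem_compl_iff, Finset.coe_sort_coe, Finset.mem_coe]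
    intro hxS
    exact absurd (Finset.mem_inter.mpr ⟨hxS, hxF⟩)
      (by rw [hne]; exact Finset.notMem_empty x)
  · rintro ⟨H, hcard, hhit⟩
    refine ⟨H, hcard, fun i => ?_⟩
    obtain ⟨v, c, hc, hsup, hedge, hin⟩ := hcyc i
    intro u' c' hc'
    obtain ⟨x, hx⟩ := hhit i
    rw [Finset.mem_inter] at hx
    have hxc : x ∈ c.support := by
      have := hx.2
      rw [← hsup, List.mem_toFinset] at this
      exact this
    have hmap : (c'.map (SimpleGraph.Embedding.induce _).toHom).IsCycle :=
      hc'.map (SimpleGraph.Embedding.induce (G := G i) _).injective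
    have hsub : ∀ e ∈ (c'.map (SimpleGraph.Embedding.induce _).toHom).edges,
        e ∈ c.edges := fun e he => hedge e (Walk.edges_subset_edgeSet _ he)
    have hxs := aux_support_subset hc hmap hsub hxc
    rw [Walk.support_map] at hxs
    obtain ⟨⟨x', hx'⟩, _, rfl⟩ := List.mem_map.mp hxs
    exact hx' (by exact hx.1)
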